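/- Let n ≥ 2, let p_1, …, p_r be distinct primes none of which divides n, and let T'V_K := V_{Φ_n} ⊗ V_{p_1} ⊗ ⋯ ⊗ V_{p_r}. Then Cond(T'V_K) ≤ Cond(V_{Φ_n}) · ∏_{i=1}^r (2 + √p_i). -/

import Mathlib

open scoped Kronecker

/-- The Frobenius norm of a complex matrix: `√(∑_{i,j} |A_{ij}|²)`. -/
noncomputable def frobNorm {m n : Type*} [Fintype m] [Fintype n]
    (A : Matrix m n ℂ) : ℝ :=
  Real.sqrt (∑ i, ∑ j, ‖A i j‖ ^ 2)

/-- The condition number `Cond(A) = ‖A‖ · ‖A⁻¹‖` (Frobenius norm). -/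
noncomputable def condNum {n : Type*} [Fintype n] [DecidableEq n]
    (A : Matrix n n ℂ) : ℝ :=
  frobNorm A * frobNorm A⁻¹

/-- The iterated Kronecker product of the matrices `V i`, realized on the
canonical index set `∀ i, Fin (t i)`: its `(f, g)` entry is `∏ i, (V i) (f i) (g i)`. -/
noncomputable def kronProd {r : ℕ} {t : Fin r → ℕ}
    (V : ∀ i, Matrix (Fin (t i)) (Fin (t i)) ℂ) :
    Matrix (∀ i, Fin (t i)) (∀ i, Fin (t i)) ℂ :=
  Matrix.of fun f g => ∏ i, V i (f i) (g i)

/-- The matrix `V_p`: `[[1, √p],[1, −√p]]` if `p ≡ 2, 3 (mod 4)`, and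
`[[1, (1+√p)/2],[1, (1−√p)/2]]` if `p ≡ 1 (mod 4)`. -/
noncomputable def Vp (p : ℕ) : Matrix (Fin 2) (Fin 2) ℝ :=
  if p % 4 = 1 then
    !![1, (1 + Real.sqrt p) / 2; 1, (1 - Real.sqrt p) / 2]
  else
    !![1, Real.sqrt p; 1, -Real.sqrt p]

/-! ### Auxiliary lemmas -/

lemma frobNorm_nonneg' {m n : Type*} [Fintype m] [Fintype n] (A : Matrix m n ℂ) :
    0 ≤ frobNorm A := Real.sqrt_nonneg _

lemma condNum_nonneg' {n : Type*} [Fintype n] [DecidableEq n] (A : Matrix n n ℂ) :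
    0 ≤ condNum A := mul_nonneg (frobNorm_nonneg' _) (frobNorm_nonneg' _)

lemma sqrt_prod' {ι : Type*} (s : Finset ι) (f : ι → ℝ) (hf : ∀ i ∈ s, 0 ≤ f i) :
    Real.sqrt (∏ i ∈ s, f i) = ∏ i ∈ s, Real.sqrt (f i) := by
  induction s using Finset.cons_induction with
  | empty => simp
  | cons a s ha ih =>
    rw [Finset.prod_cons, Finset.prod_cons, Real.sqrt_mul (hf a (Finset.mem_cons_self a s)),
      ih fun i hi => hf i (Finset.mem_cons_of_mem hi)]

lemma sum_pi_prod {ι : Type*} [Fintype ι] [DecidableEq ι] {κ : ι → Type*}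
    [∀ i, Fintype (κ i)] {R : Type*} [CommSemiring R] (c : ∀ i, κ i → R) :
    ∑ g : ∀ i, κ i, ∏ i, c i (g i) = ∏ i, ∑ b, c i b := by
  rw [Finset.prod_univ_sum (fun _ => Finset.univ) c, Fintype.piFinset_univ]

lemma frobNorm_kronecker {m₁ n₁ m₂ n₂ : Type*} [Fintype m₁] [Fintype n₁] [Fintype m₂] [Fintype n₂]
    (A : Matrix m₁ n₁ ℂ) (B : Matrix m₂ n₂ ℂ) :
    frobNorm (A ⊗ₖ B) = frobNorm A * frobNorm B := by
  unfold frobNorm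
  rw [← Real.sqrt_mul (by positivity)]
  congr 1
  simp only [Matrix.kroneckerMap_apply, norm_mul, mul_pow]
  calc ∑ i : m₁ × m₂, ∑ j : n₁ × n₂, ‖A i.1 j.1‖ ^ 2 * ‖B i.2 j.2‖ ^ 2
      = ∑ i : m₁ × m₂, (∑ j₁, ‖A i.1 j₁‖ ^ 2) * (∑ j₂, ‖B i.2 j₂‖ ^ 2) := by
        refine Finset.sum_congr rfl fun i _ => ?_
        rw [Finset.sum_mul_sum, Fintype.sum_prod_type]
    _ = (∑ i₁, ∑ j₁, ‖A i₁ j₁‖ ^ 2) * ∑ i₂, ∑ j₂, ‖B i₂ j₂‖ ^ 2 := by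
        rw [Finset.sum_mul_sum, Fintype.sum_prod_type]

lemma condNum_kronecker {m n : Type*} [Fintype m] [DecidableEq m] [Fintype n] [DecidableEq n]
    (A : Matrix m m ℂ) (B : Matrix n n ℂ) :
    condNum (A ⊗ₖ B) = condNum A * condNum B := by
  rw [condNum, Matrix.inv_kronecker, frobNorm_kronecker, frobNorm_kronecker,
    condNum, condNum]
  ring

lemma frobNorm_kronProd {r : ℕ} {t : Fin r → ℕ}
    (V : ∀ i, Matrix (Fin (t i)) (Fin (t i)) ℂ) :
    frobNorm (kronProd V) = ∏ i, frobNorm (V i) := by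
  have hsum : ∑ f, ∑ g, ‖kronProd V f g‖ ^ 2 = ∏ i, ∑ a, ∑ b, ‖V i a b‖ ^ 2 := by
    calc ∑ f, ∑ g, ‖kronProd V f g‖ ^ 2
        = ∑ f : ∀ i, Fin (t i), ∑ g : ∀ i, Fin (t i), ∏ i, ‖V i (f i) (g i)‖ ^ 2 := by
          refine Finset.sum_congr rfl fun f _ => Finset.sum_congr rfl fun g _ => ?_
          rw [kronProd, Matrix.of_apply, norm_prod, ← Finset.prod_pow]
      _ = ∑ f : ∀ i, Fin (t i), ∏ i, ∑ b, ‖V i (f i) b‖ ^ 2 := by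
          refine Finset.sum_congr rfl fun f _ => ?_
          exact sum_pi_prod fun i b => ‖V i (f i) b‖ ^ 2
      _ = ∏ i, ∑ a, ∑ b, ‖V i a b‖ ^ 2 := sum_pi_prod fun i a => ∑ b, ‖V i a b‖ ^ 2
  rw [frobNorm, hsum, sqrt_prod' _ _ (fun i _ => by positivity)]
  rfl

lemma kronProd_mul {r : ℕ} {t : Fin r → ℕ}
    (V W : ∀ i, Matrix (Fin (t i)) (Fin (t i)) ℂ) :
    kronProd V * kronProd W = kronProd (fun i => V i * W i) := by
  ext f h
  rw [Matrix.mul_apply]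
  calc ∑ g : ∀ i, Fin (t i), kronProd V f g * kronProd W g h
      = ∑ g : ∀ i, Fin (t i), ∏ i, (V i (f i) (g i) * W i (g i) (h i)) := by
        refine Finset.sum_congr rfl fun g _ => ?_
        rw [kronProd, kronProd, Matrix.of_apply, Matrix.of_apply, Finset.prod_mul_distrib]
    _ = ∏ i, ∑ b, V i (f i) b * W i b (h i) :=
        sum_pi_prod fun i b => V i (f i) b * W i b (h i)
    _ = kronProd (fun i => V i * W i) f h := by
        rw [kronProd, Matrix.of_apply]
        exact Finset.prod_congr rfl fun i _ => (Matrix.mul_apply).symm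

lemma kronProd_one {r : ℕ} {t : Fin r → ℕ} :
    kronProd (fun i => (1 : Matrix (Fin (t i)) (Fin (t i)) ℂ)) = 1 := by
  ext f g
  rw [kronProd, Matrix.of_apply]
  by_cases h : f = g
  · subst h
    simp [Matrix.one_apply]
  · obtain ⟨i, hi⟩ := Function.ne_iff.mp h
    rw [Matrix.one_apply_ne h]
    exact Finset.prod_eq_zero (Finset.mem_univ i) (Matrix.one_apply_ne hi)

lemma kronProd_inv {r : ℕ} {t : Fin r → ℕ}
    (V : ∀ i, Matrix (Fin (t i)) (Fin (t i)) ℂ) (h : ∀ i, IsUnit (V i).det) :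
    (kronProd V)⁻¹ = kronProd fun i => (V i)⁻¹ :=
  Matrix.inv_eq_right_inv (by
    rw [kronProd_mul]
    have e : (fun i => V i * (V i)⁻¹) = fun i => (1 : Matrix (Fin (t i)) (Fin (t i)) ℂ) :=
      funext fun i => Matrix.mul_nonsing_inv _ (h i)
    rw [e, kronProd_one])

lemma condNum_kronProd {r : ℕ} {t : Fin r → ℕ}
    (V : ∀ i, Matrix (Fin (t i)) (Fin (t i)) ℂ) (h : ∀ i, IsUnit (V i).det) :
    condNum (kronProd V) = ∏ i, condNum (V i) := by
  rw [condNum, kronProd_inv _ h, frobNorm_kronProd, frobNorm_kronProd,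
    ← Finset.prod_mul_distrib]
  exact Finset.prod_congr rfl fun i _ => rfl

lemma map_inv_ofReal {n : Type*} [Fintype n] [DecidableEq n] (A : Matrix n n ℝ)
    (h : IsUnit A.det) :
    (A.map Complex.ofReal)⁻¹ = A⁻¹.map Complex.ofReal :=
  Matrix.inv_eq_right_inv (by
    have h1 : A.map Complex.ofReal * A⁻¹.map Complex.ofReal = (A * A⁻¹).map Complex.ofReal :=
      (Matrix.map_mul (f := Complex.ofRealHom)).symm
    rw [h1, Matrix.mul_nonsing_inv _ h, Matrix.map_one _ (by simp) (by simp)])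

lemma frobNorm_map_ofReal {m n : Type*} [Fintype m] [Fintype n] (A : Matrix m n ℝ) :
    frobNorm (A.map Complex.ofReal) = Real.sqrt (∑ i, ∑ j, (A i j) ^ 2) := by
  simp [frobNorm, Matrix.map_apply, Complex.norm_real, Real.norm_eq_abs, sq_abs]

lemma det_Vp_ne (p : ℕ) (hp : 2 ≤ p) : (Vp p).det ≠ 0 := by
  have hp0 : (0:ℝ) < p := by positivity
  have hs0 : 0 < Real.sqrt p := Real.sqrt_pos.mpr hp0
  rw [Vp]
  split
  · rw [Matrix.det_fin_two_of]
    intro hcon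
    have : -Real.sqrt p = 0 := by rw [← hcon]; ring
    linarith
  · rw [Matrix.det_fin_two_of]
    intro hcon
    have : -(2 * Real.sqrt p) = 0 := by rw [← hcon]; ring
    linarith

lemma condNum_Vp_le (p : ℕ) (hp : 2 ≤ p) :
    condNum ((Vp p).map Complex.ofReal) ≤ 2 + Real.sqrt p := by
  have hp0 : (0:ℝ) < p := by positivity
  have hp2 : (2:ℝ) ≤ p := by exact_mod_cast hp
  set s := Real.sqrt (p:ℝ) with hs
  have hs2 : s ^ 2 = p := Real.sq_sqrt hp0.le
  have hs1 : 1 ≤ s := by nlinarith [Real.sqrt_nonneg (p:ℝ)]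
  have hs0 : 0 < s := lt_of_lt_of_le one_pos hs1
  have hd : (Vp p).det ≠ 0 := det_Vp_ne p hp
  have hdet : IsUnit (Vp p).det := isUnit_iff_ne_zero.mpr hd
  rw [condNum, map_inv_ofReal _ hdet, frobNorm_map_ofReal, frobNorm_map_ofReal,
    ← Real.sqrt_mul (by positivity)]
  have key : (∑ i, ∑ j, Vp p i j ^ 2) * (∑ i, ∑ j, (Vp p)⁻¹ i j ^ 2) ≤ (2 + s) ^ 2 := by
    by_cases hc : p % 4 = 1
    · have hV : Vp p = !![1, (1 + s) / 2; 1, (1 - s) / 2] := by rw [Vp, if_pos hc]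
      rw [hV] at hd ⊢
      rw [Matrix.inv_def, Ring.inverse_eq_inv', Matrix.det_fin_two_of,
        Matrix.adjugate_fin_two_of]
      rw [Matrix.det_fin_two_of] at hd
      simp only [Fin.sum_univ_two, Matrix.smul_apply, smul_eq_mul,
        Matrix.cons_val', Matrix.cons_val_zero, Matrix.cons_val_one, Matrix.head_cons,
        Matrix.empty_val', Matrix.cons_val_fin_one, Matrix.of_apply]
      have hd' : 1 * ((1 - s) / 2) - (1 + s) / 2 * 1 = -s := by ring
      rw [hd'] at hd ⊢
      field_simp
      nlinarith [mul_nonneg (mul_nonneg (by linarith : (0:ℝ) ≤ s - 1)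
        (by linarith : (0:ℝ) ≤ s + 5)) (by positivity : (0:ℝ) ≤ 3*s^2 + 4*s + 5), hs0, hs1]
    · have hV : Vp p = !![1, s; 1, -s] := by rw [Vp, if_neg hc]
      rw [hV] at hd ⊢
      rw [Matrix.inv_def, Ring.inverse_eq_inv', Matrix.det_fin_two_of,
        Matrix.adjugate_fin_two_of]
      rw [Matrix.det_fin_two_of] at hd
      simp only [Fin.sum_univ_two, Matrix.smul_apply, smul_eq_mul,
        Matrix.cons_val', Matrix.cons_val_zero, Matrix.cons_val_one, Matrix.head_cons,
        Matrix.empty_val', Matrix.cons_val_fin_one, Matrix.of_apply]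
      have hd' : 1 * -s - s * 1 = -(2*s) := by ring
      rw [hd'] at hd ⊢
      field_simp
      nlinarith [mul_nonneg (by linarith : (0:ℝ) ≤ 2*s - 1)
        (by positivity : (0:ℝ) ≤ 2*s^2 + 2*s + 1), hs0, hs1]
  calc Real.sqrt ((∑ i, ∑ j, Vp p i j ^ 2) * ∑ i, ∑ j, (Vp p)⁻¹ i j ^ 2)
      ≤ Real.sqrt ((2 + s) ^ 2) := Real.sqrt_le_sqrt key
    _ = 2 + s := Real.sqrt_sq (by positivity)

theorem condNum_hybrid_le (n : ℕ) (hn : 2 ≤ n)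
    (ζ : Fin n.totient → ℂ) (hζ : ∀ i, IsPrimitiveRoot (ζ i) n)
    (hinj : Function.Injective ζ)
    (r : ℕ) (p : Fin r → ℕ) (hp : ∀ i, Nat.Prime (p i))
    (hpinj : Function.Injective p) (hpn : ∀ i, ¬ p i ∣ n) :
    condNum ((Matrix.of fun i j : Fin n.totient => ζ i ^ (j : ℕ)) ⊗ₖ
        kronProd fun i => (Vp (p i)).map Complex.ofReal) ≤
      condNum (Matrix.of fun i j : Fin n.totient => ζ i ^ (j : ℕ)) *
        ∏ i, (2 + Real.sqrt (p i)) := by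
  have hdetV : ∀ i, IsUnit ((Vp (p i)).map Complex.ofReal).det := by
    intro i
    have e : ((Vp (p i)).map Complex.ofReal).det = ((Vp (p i)).det : ℂ) :=
      (RingHom.map_det Complex.ofRealHom (Vp (p i))).symm
    rw [isUnit_iff_ne_zero, e]
    exact Complex.ofReal_ne_zero.mpr (det_Vp_ne _ (hp i).two_le)
  rw [condNum_kronecker, condNum_kronProd _ hdetV]
  refine mul_le_mul_of_nonneg_left ?_ (condNum_nonneg' _)
  exact Finset.prod_le_prod (fun i _ => condNum_nonneg' _)
    (fun i _ => condNum_Vp_le _ (hp i).two_le)
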